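/- Let H(d,α) be a corank 1 Carnot group with projections {π_j}_{j=1}^{m}, m = d+2n. Suppose there are c_j > 0 (1 ≤ j ≤ m) and D ∈ ℝ with ∑_{j} c_j > 1 such that for all non-negative measurable functions f₁, …, f_m on ℝ^{d+2n}: ∫_{ℝ^{d+2n+1}} ∏_{j=1}^{m} f_j(π_j(y)) dy ≤ e^D ∏_{j=1}^{m} ‖f_j‖_{1/c_j}. Then on ℝ × ℝ^{d+2n+1}, with maps p̄₁(s,y) := y and p̄_{j+1}(s,y) := (s, π_j(y)) for 1 ≤ j ≤ m, one has ∫_{ℝ × ℝ^{d+2n+1}} ∏_{j=1}^{m+1} f_j(p̄_j(s,y)) ds dy ≤ e^{D̄} ∏_{j=1}^{m+1} ‖f_j‖_{1/c̄_j} for all non-negative measurable f₁, …, f_{m+1}, where σ := ∑_{j=1}^{m} c_j, D̄ := D/σ, c̄₁ := (σ−1)/σ, and c̄_{j+1} := c_j/σ for 1 ≤ j ≤ m. -/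

import Mathlib

open MeasureTheory ENNReal

/-- Delete the `j`-th coordinate of `x : ℝ^k` and append `s` as the last coordinate,
identifying `ℝ^{k-1} × ℝ` with `ℝ^k`. -/
noncomputable def deleteInsert {k : ℕ} (j : Fin k) (x : Fin k → ℝ) (s : ℝ) : Fin k → ℝ :=
  fun i => if _ : (i : ℕ) + 1 = k then s
    else if _ : (i : ℕ) < (j : ℕ) then x i
    else x ⟨(i : ℕ) + 1, by have := i.isLt; omega⟩

/-- The quadratic correction term in the `j`-th projection on the corank 1 Carnot group. -/
noncomputable def tshift (d n : ℕ) (α : Fin n → ℝ) (j : Fin (d + 2*n))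
    (x : Fin (d + 2*n) → ℝ) : ℝ :=
  if _ : (j : ℕ) < d then 0
  else (if ((j : ℕ) - d) % 2 = 0 then (1:ℝ) else -1) *
      (α ⟨((j : ℕ) - d) / 2, by have := j.isLt; omega⟩ / 2) *
      x ⟨d + 2 * (((j : ℕ) - d) / 2), by have := j.isLt; omega⟩ *
      x ⟨d + 2 * (((j : ℕ) - d) / 2) + 1, by have := j.isLt; omega⟩

/-- The `j`-th projection `π_j : H(d,α) → ℝ^{d+2n}` (for `1 ≤ j ≤ d+2n` in 1-based
numbering), where the target `ℝ^{d+2n-1} × ℝ` is identified with `ℝ^{d+2n}` by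
placing `x̂_j` in the first `d+2n-1` slots and the (shifted) `t`-variable in the
last slot. -/
noncomputable def carnotProj (d n : ℕ) (α : Fin n → ℝ) (j : Fin (d + 2*n))
    (p : (Fin (d + 2*n) → ℝ) × ℝ) : Fin (d + 2*n) → ℝ :=
  deleteInsert j p.1 (p.2 + tshift d n α j p.1)



lemma measurable_deleteInsert {k : ℕ} (j : Fin k) :
    Measurable fun p : (Fin k → ℝ) × ℝ => deleteInsert j p.1 p.2 := by
  apply measurable_pi_lambda
  intro i
  unfold deleteInsert
  by_cases h1 : (i : ℕ) + 1 = k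
  · simp only [dif_pos h1]; exact measurable_snd
  · by_cases h2 : (i : ℕ) < (j : ℕ)
    · simp only [dif_neg h1, dif_pos h2]
      exact (measurable_pi_apply i).comp measurable_fst
    · simp only [dif_neg h1, dif_neg h2]
      exact (measurable_pi_apply _).comp measurable_fst

lemma measurable_tshift (d n : ℕ) (α : Fin n → ℝ) (j : Fin (d + 2*n)) :
    Measurable (tshift d n α j) := by
  unfold tshift
  by_cases h : (j : ℕ) < d
  · simp only [dif_pos h]; exact measurable_const
  · simp only [dif_neg h]
    exact ((measurable_pi_apply _).const_mul _).mul (measurable_pi_apply _)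

lemma measurable_carnotProj (d n : ℕ) (α : Fin n → ℝ) (j : Fin (d + 2*n)) :
    Measurable (carnotProj d n α j) :=
  (measurable_deleteInsert j).comp
    (measurable_fst.prodMk (measurable_snd.add ((measurable_tshift d n α j).comp measurable_fst)))

lemma eLpNorm_ofReal_rpow {X : Type*} [MeasurableSpace X] (μ : Measure X) (f : X → ℝ)
    (hf0 : ∀ x, 0 ≤ f x) {p : ℝ} (hp : 0 < p) :
    eLpNorm f (ENNReal.ofReal p) μ = (∫⁻ x, ENNReal.ofReal (f x) ^ p ∂μ) ^ (1/p) := by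
  rw [eLpNorm_eq_lintegral_rpow_enorm_toReal (ENNReal.ofReal_pos.mpr hp).ne' ENNReal.ofReal_ne_top,
    ENNReal.toReal_ofReal hp.le]
  congr 1
  refine lintegral_congr fun x => ?_
  congr 1
  rw [← ofReal_norm, Real.norm_of_nonneg (hf0 x)]

/-- **Proposition 3.2 of the paper**: if a Brascamp–Lieb type inequality with
data `(c_j, D)` holds on the corank 1 Carnot group `H(d,α)` (with `σ = ∑ c_j > 1`),
then on `ℝ × H(d,α)` the inequality with constant `e^{D/σ}` and exponents
`1/c̄₁ = σ/(σ-1)`, `1/c̄_{j+1} = σ/c_j`, holds for the maps `p̄₁(s,y) = y` and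
`p̄_{j+1}(s,y) = (s, π_j y)`. -/
theorem product_line_brascamp_lieb (d n : ℕ) (hn : 1 ≤ n)
    (α : Fin n → ℝ) (hα : ∀ i, 0 < α i) (hmono : Monotone α)
    (D : ℝ) (c : Fin (d + 2*n) → ℝ) (hc : ∀ j, 0 < c j)
    (hσ : 1 < ∑ j, c j)
    (hBL : ∀ F : Fin (d + 2*n) → (Fin (d + 2*n) → ℝ) → ℝ,
      (∀ j, Measurable (F j)) → (∀ j y, 0 ≤ F j y) →
      ∫⁻ y : (Fin (d + 2*n) → ℝ) × ℝ,
          ∏ j, ENNReal.ofReal (F j (carnotProj d n α j y)) ≤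
        ENNReal.ofReal (Real.exp D) *
          ∏ j, eLpNorm (F j) (ENNReal.ofReal (1 / c j)) volume)
    (f₁ : ((Fin (d + 2*n) → ℝ) × ℝ) → ℝ)
    (g : Fin (d + 2*n) → (ℝ × (Fin (d + 2*n) → ℝ)) → ℝ)
    (hf₁ : Measurable f₁) (hf₁0 : ∀ y, 0 ≤ f₁ y)
    (hg : ∀ j, Measurable (g j)) (hg0 : ∀ j u, 0 ≤ g j u) :
    ∫⁻ q : ℝ × ((Fin (d + 2*n) → ℝ) × ℝ),
        ENNReal.ofReal (f₁ q.2) *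
          ∏ j, ENNReal.ofReal (g j (q.1, carnotProj d n α j q.2)) ≤
      ENNReal.ofReal (Real.exp (D / ∑ j, c j)) *
        (eLpNorm f₁ (ENNReal.ofReal (1 / ((∑ j, c j - 1) / ∑ j, c j))) volume *
          ∏ j, eLpNorm (g j) (ENNReal.ofReal (1 / (c j / ∑ j, c j))) volume) := by
  classical
  have hσ0 : (0:ℝ) < ∑ j, c j := lt_trans one_pos hσ
  simp only [one_div_div]
  set σ := ∑ j, c j with hσdef
  have hσ1 : (0:ℝ) < σ - 1 := by linarith
  have hπ : ∀ j, Measurable (carnotProj d n α j) := measurable_carnotProj d n α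
  have hp₁pos : (0:ℝ) < σ / (σ - 1) := div_pos hσ0 hσ1
  have hconj : Real.HolderConjugate (σ / (σ - 1)) σ := by
    rw [Real.holderConjugate_iff]
    constructor
    · rw [lt_div_iff₀ hσ1]; linarith
    · rw [inv_div]; field_simp; ring
  set A : Fin (d + 2*n) → ℝ → ℝ≥0∞ :=
    fun j s => ∫⁻ z : Fin (d + 2*n) → ℝ, ENNReal.ofReal (g j (s, z)) ^ (σ / c j) with hA
  have hgm : ∀ j, Measurable fun u : ℝ × (Fin (d + 2*n) → ℝ) =>
      ENNReal.ofReal (g j u) ^ (σ / c j) :=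
    fun j => (ENNReal.measurable_ofReal.comp (hg j)).pow_const _
  have hAmeas : ∀ j, Measurable (A j) := fun j =>
    Measurable.lintegral_prod_right (hgm j)
  have hGm : Measurable fun q : ℝ × ((Fin (d + 2*n) → ℝ) × ℝ) =>
      ENNReal.ofReal (f₁ q.2) * ∏ j, ENNReal.ofReal (g j (q.1, carnotProj d n α j q.2)) := by
    refine Measurable.mul (ENNReal.measurable_ofReal.comp (hf₁.comp measurable_snd)) ?_
    exact Finset.measurable_prod _ fun j _ =>
      ENNReal.measurable_ofReal.comp
        ((hg j).comp (measurable_fst.prodMk ((hπ j).comp measurable_snd)))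
  set N₁ : ℝ≥0∞ := eLpNorm f₁ (ENNReal.ofReal (σ / (σ - 1))) volume with hN₁
  have key : ∀ s : ℝ,
      (∫⁻ y : (Fin (d + 2*n) → ℝ) × ℝ,
        ENNReal.ofReal (f₁ y) * ∏ j, ENNReal.ofReal (g j (s, carnotProj d n α j y))) ≤
      N₁ * (ENNReal.ofReal (Real.exp (D / σ)) * ∏ j, A j s ^ (c j / σ)) := by
    intro s
    set φ : ((Fin (d + 2*n) → ℝ) × ℝ) → ℝ≥0∞ := fun y => ENNReal.ofReal (f₁ y) with hφ
    set ψ : ((Fin (d + 2*n) → ℝ) × ℝ) → ℝ≥0∞ :=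
      fun y => ∏ j, ENNReal.ofReal (g j (s, carnotProj d n α j y)) with hψ
    have hφm : AEMeasurable φ volume := (ENNReal.measurable_ofReal.comp hf₁).aemeasurable
    have hψm : AEMeasurable ψ volume := (Finset.measurable_prod _ fun j _ =>
      ENNReal.measurable_ofReal.comp
        ((hg j).comp (measurable_const.prodMk (hπ j)))).aemeasurable
    have hψσ : (∫⁻ y, ψ y ^ σ) ≤ ENNReal.ofReal (Real.exp D) * ∏ j, A j s ^ (c j) := by
      have hF : ∀ j, Measurable fun z => g j (s, z) ^ σ :=
        fun j => ((hg j).comp (measurable_const.prodMk measurable_id)).pow_const σ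
      have hF0 : ∀ j z, 0 ≤ g j (s, z) ^ σ := fun j z => Real.rpow_nonneg (hg0 j _) σ
      have e2 : ∀ j, eLpNorm (fun z => g j (s, z) ^ σ) (ENNReal.ofReal (1 / c j)) volume
          = A j s ^ (c j) := by
        intro j
        rw [eLpNorm_ofReal_rpow _ _ (fun z => hF0 j z)
          (one_div_pos.mpr (hc j)), one_div_one_div]
        congr 1
        refine lintegral_congr fun z => ?_
        rw [← ENNReal.ofReal_rpow_of_nonneg (hg0 j _) hσ0.le, ← ENNReal.rpow_mul,
          mul_one_div]
      calc (∫⁻ y, ψ y ^ σ)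
          = ∫⁻ y : (Fin (d + 2*n) → ℝ) × ℝ,
              ∏ j, ENNReal.ofReal (g j (s, carnotProj d n α j y) ^ σ) := by
            refine lintegral_congr fun y => ?_
            rw [hψ]
            calc (∏ j, ENNReal.ofReal (g j (s, carnotProj d n α j y))) ^ σ
                = ∏ j, ENNReal.ofReal (g j (s, carnotProj d n α j y)) ^ σ :=
                  (ENNReal.prod_rpow_of_nonneg hσ0.le).symm
              _ = ∏ j, ENNReal.ofReal (g j (s, carnotProj d n α j y) ^ σ) :=
                  Finset.prod_congr rfl fun j _ =>
                    ENNReal.ofReal_rpow_of_nonneg (hg0 j _) hσ0.le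
        _ ≤ ENNReal.ofReal (Real.exp D) *
              ∏ j, eLpNorm (fun z => g j (s, z) ^ σ) (ENNReal.ofReal (1 / c j)) volume :=
            hBL (fun j z => g j (s, z) ^ σ) hF hF0
        _ = ENNReal.ofReal (Real.exp D) * ∏ j, A j s ^ (c j) := by
            congr 1
            exact Finset.prod_congr rfl fun j _ => e2 j
    have h2 : (∫⁻ y, ψ y ^ σ) ^ (1/σ) ≤
        ENNReal.ofReal (Real.exp (D / σ)) * ∏ j, A j s ^ (c j / σ) := by
      calc (∫⁻ y, ψ y ^ σ) ^ (1/σ)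
          ≤ (ENNReal.ofReal (Real.exp D) * ∏ j, A j s ^ (c j)) ^ (1/σ) :=
            ENNReal.rpow_le_rpow hψσ (one_div_pos.mpr hσ0).le
        _ = ENNReal.ofReal (Real.exp D) ^ (1/σ) * ∏ j, (A j s ^ (c j)) ^ (1/σ) := by
            rw [ENNReal.mul_rpow_of_nonneg _ _ (one_div_pos.mpr hσ0).le,
              ← ENNReal.prod_rpow_of_nonneg (one_div_pos.mpr hσ0).le]
        _ = ENNReal.ofReal (Real.exp (D / σ)) * ∏ j, A j s ^ (c j / σ) := by
            congr 1
            · rw [ENNReal.ofReal_rpow_of_pos (Real.exp_pos D),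
                Real.rpow_def_of_pos (Real.exp_pos D), Real.log_exp, mul_one_div]
            · exact Finset.prod_congr rfl fun j _ => by
                rw [← ENNReal.rpow_mul, mul_one_div]
    calc (∫⁻ y, φ y * ψ y) = ∫⁻ y, (φ * ψ) y := rfl
      _ ≤ (∫⁻ y, φ y ^ (σ / (σ - 1))) ^ (1/(σ / (σ - 1))) * (∫⁻ y, ψ y ^ σ) ^ (1/σ) :=
          ENNReal.lintegral_mul_le_Lp_mul_Lq volume hconj hφm hψm
      _ = N₁ * (∫⁻ y, ψ y ^ σ) ^ (1/σ) := by
          rw [hN₁, eLpNorm_ofReal_rpow volume f₁ hf₁0 hp₁pos]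
      _ ≤ N₁ * (ENNReal.ofReal (Real.exp (D / σ)) * ∏ j, A j s ^ (c j / σ)) :=
          mul_le_mul_right h2 N₁
  have hfin : ∀ j, (∫⁻ s : ℝ, A j s) ^ (c j / σ)
      = eLpNorm (g j) (ENNReal.ofReal (σ / c j)) volume := by
    intro j
    rw [eLpNorm_ofReal_rpow volume (g j) (hg0 j) (div_pos hσ0 (hc j)), one_div_div]
    congr 1
    rw [MeasureTheory.Measure.volume_eq_prod, lintegral_prod _ (hgm j).aemeasurable]
  calc ∫⁻ q : ℝ × ((Fin (d + 2*n) → ℝ) × ℝ),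
        ENNReal.ofReal (f₁ q.2) *
          ∏ j, ENNReal.ofReal (g j (q.1, carnotProj d n α j q.2))
      = ∫⁻ s : ℝ, ∫⁻ y : (Fin (d + 2*n) → ℝ) × ℝ,
          ENNReal.ofReal (f₁ y) * ∏ j, ENNReal.ofReal (g j (s, carnotProj d n α j y)) := by
        rw [MeasureTheory.Measure.volume_eq_prod, lintegral_prod _ hGm.aemeasurable]
    _ ≤ ∫⁻ s : ℝ, N₁ * (ENNReal.ofReal (Real.exp (D / σ)) * ∏ j, A j s ^ (c j / σ)) :=
        lintegral_mono key
    _ = (N₁ * ENNReal.ofReal (Real.exp (D / σ))) * ∫⁻ s : ℝ, ∏ j, A j s ^ (c j / σ) := by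
        simp_rw [← mul_assoc]
        rw [lintegral_const_mul _ (Finset.measurable_prod _ fun j _ => (hAmeas j).pow_const _)]
    _ ≤ (N₁ * ENNReal.ofReal (Real.exp (D / σ))) * ∏ j, (∫⁻ s : ℝ, A j s) ^ (c j / σ) := by
        refine mul_le_mul_right ?_ _
        refine ENNReal.lintegral_prod_norm_pow_le _ (fun j _ => (hAmeas j).aemeasurable) ?_ ?_
        · rw [← Finset.sum_div, ← hσdef]; exact div_self hσ0.ne'
        · exact fun j _ => (div_nonneg (hc j).le hσ0.le)
    _ = ENNReal.ofReal (Real.exp (D / σ)) *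
          (N₁ * ∏ j, eLpNorm (g j) (ENNReal.ofReal (σ / c j)) volume) := by
        rw [Finset.prod_congr rfl fun j _ => hfin j]
        ring
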